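/- Let m ≥ 1 and r, k ≥ 0 be integers, let ℓ⁽¹⁾, …, ℓ⁽ᵐ⁾ be pairwise distinct elements of ℤʳ, and let σ₁, …, σ_m be entire functions on ℂʳ × ℂᵏ. Suppose that Σ_{j=1}^{m} (Π_{i=1}^{r} t_i^{ℓ⁽ʲ⁾_i}) · σ_j(t, w) = 0 for every (t, w) ∈ ℂʳ × ℂᵏ with t_i ≠ 0 for all i. Then there exists j ∈ {1, …, m} such that σ_j(0, w) = 0 for all w ∈ ℂᵏ. -/

import Mathlib

open Finset

/-- Uniqueness of base-`M` digits: if digits are bounded by `M` in absolute value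
and the value is zero, all digits are zero. -/
private lemma digit_zero (M : ℤ) : ∀ (n : ℕ) (d : ℕ → ℤ), (∀ i, i < n → |d i| < M) →
    ∑ i ∈ Finset.range n, d i * M ^ i = 0 → ∀ i, i < n → d i = 0 := by
  intro n
  induction n with
  | zero => intro d _ _ i hi; omega
  | succ n ih =>
    intro d hd hsum
    rw [Finset.sum_range_succ'] at hsum
    have hfac : ∑ i ∈ Finset.range n, d (i + 1) * M ^ (i + 1)
        = M * ∑ i ∈ Finset.range n, d (i + 1) * M ^ i := by
      rw [Finset.mul_sum]; exact Finset.sum_congr rfl fun i _ => by ring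
    rw [hfac] at hsum
    set S := ∑ i ∈ Finset.range n, d (i + 1) * M ^ i with hS
    have h0 : |d 0| < M := hd 0 (by omega)
    have hM : 0 < M := lt_of_le_of_lt (abs_nonneg _) h0
    have hd0M : d 0 = -(M * S) := by rw [pow_zero, mul_one] at hsum; linarith
    have hS0 : S = 0 := by
      by_contra hne
      have h1 : 1 ≤ |S| := Int.one_le_abs hne
      have : M ≤ |d 0| := by
        rw [hd0M, abs_neg, abs_mul, abs_of_pos hM]
        nlinarith
      omega
    have hd0 : d 0 = 0 := by rw [hd0M, hS0]; ring
    have htail := ih (fun i => d (i + 1)) (fun i hi => hd (i + 1) (by omega))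
      (by rw [← hS, hS0])
    intro i hi
    match i with
    | 0 => exact hd0
    | (k + 1) => exact htail k (by omega)

private lemma zpow_sum' {s : ℂ} (hs : s ≠ 0)
    {ι : Type*} (t : Finset ι) (c : ι → ℤ) :
    s ^ (∑ i ∈ t, c i) = ∏ i ∈ t, s ^ c i := by
  classical
  induction t using Finset.induction with
  | empty => simp
  | insert _ _ h ih => rw [Finset.sum_insert h, Finset.prod_insert h, zpow_add₀ hs, ih]

/-- "linear independence lemma" for the trivial family ℂʳ × ℂᵏ → ℂʳ:
if distinct Laurent monomial twists of entire functions σ_j sum to zero on the set where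
all t_i ≠ 0, then some σ_j vanishes on the special fibre {0} × ℂᵏ. -/
theorem stmt_8 (m r k : ℕ) (hm : 1 ≤ m)
    (l : Fin m → Fin r → ℤ) (hl : Function.Injective l)
    (σ : Fin m → ((Fin r → ℂ) × (Fin k → ℂ)) → ℂ)
    (hσ : ∀ j, AnalyticOnNhd ℂ (σ j) Set.univ)
    (heq : ∀ (t : Fin r → ℂ) (w : Fin k → ℂ), (∀ i, t i ≠ 0) →
      ∑ j, (∏ i, t i ^ l j i) * σ j (t, w) = 0) :
    ∃ j, ∀ w : Fin k → ℂ, σ j (0, w) = 0 := by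
  classical
  haveI : NeZero m := ⟨by omega⟩
  -- choose a big base N
  set N : ℕ := 1 + Finset.univ.sup
    (fun p : (Fin m × Fin m) × Fin r => (l p.1.1 p.2 - l p.1.2 p.2).natAbs) with hNdef
  have hN : ∀ j j' i, |l j i - l j' i| < (N : ℤ) := by
    intro j j' i
    have := Finset.le_sup (f := fun p : (Fin m × Fin m) × Fin r =>
      (l p.1.1 p.2 - l p.1.2 p.2).natAbs) (Finset.mem_univ ((j, j'), i))
    simp only at this
    rw [hNdef, Int.abs_eq_natAbs]
    omega
  have hN1 : 1 ≤ N := by omega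
  -- the exponents
  set e : Fin m → ℤ := fun j => ∑ i : Fin r, l j i * (N : ℤ) ^ (i : ℕ) with hedef
  have he : Function.Injective e := by
    intro j j' hjj'
    apply hl
    funext i
    set d : ℕ → ℤ := fun i => if h : i < r then l j ⟨i, h⟩ - l j' ⟨i, h⟩ else 0 with hddef
    have hsum : ∑ i ∈ Finset.range r, d i * (N : ℤ) ^ i = 0 := by
      rw [← Fin.sum_univ_eq_sum_range (fun i => d i * (N : ℤ) ^ i) r]
      have : ∀ i : Fin r, d i * (N : ℤ) ^ (i : ℕ)
          = l j i * (N : ℤ) ^ (i : ℕ) - l j' i * (N : ℤ) ^ (i : ℕ) := by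
        intro i; rw [hddef]; simp [i.isLt, Fin.eta]; ring
      rw [Finset.sum_congr rfl (fun i _ => this i), Finset.sum_sub_distrib]
      rw [hedef] at hjj'
      simpa using sub_eq_zero_of_eq hjj'
    have hbd : ∀ i, i < r → |d i| < (N : ℤ) := by
      intro i hi
      rw [hddef]; simp only [hi, dif_pos]
      exact hN _ _ _
    have := digit_zero (N : ℤ) r d hbd hsum i i.isLt
    rw [hddef] at this
    simp only [i.isLt, dif_pos, Fin.eta] at this
    linarith
  -- the minimizing index
  obtain ⟨j₀, -, hj₀⟩ := Finset.exists_min_image Finset.univ e Finset.univ_nonempty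
  refine ⟨j₀, fun w => ?_⟩
  -- natural-number exponents
  set n : Fin m → ℕ := fun j => (e j - e j₀).toNat with hndef
  have hn0 : n j₀ = 0 := by simp [hndef]
  have hnpos : ∀ j, j ≠ j₀ → 0 < n j := by
    intro j hj
    have h1 := hj₀ j (Finset.mem_univ j)
    have h2 : e j ≠ e j₀ := fun h => hj (he h)
    simp only [hndef]; omega
  have hncast : ∀ j, (n j : ℤ) = e j - e j₀ := by
    intro j
    have h1 := hj₀ j (Finset.mem_univ j)
    simp only [hndef]; omega
  -- the one-variable function
  set g : Fin m → ℂ → ℂ := fun j s => σ j ((fun i => s ^ (N ^ (i : ℕ))), w) with hgdef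
  set h : ℂ → ℂ := fun s => ∑ j, s ^ (n j) * g j s with hhdef
  have hcont : Continuous h := by
    apply continuous_finset_sum
    intro j _
    apply Continuous.mul (continuous_pow _)
    have hc : Continuous (σ j) := by
      rw [← continuousOn_univ]
      exact (hσ j).continuousOn
    exact hc.comp ((continuous_pi fun i => continuous_pow _).prodMk continuous_const)
  have hzero : ∀ s : ℂ, s ≠ 0 → h s = 0 := by
    intro s hs
    have hts : ∀ i : Fin r, (s ^ (N ^ (i : ℕ)) : ℂ) ≠ 0 := fun i => pow_ne_zero _ hs
    have key := heq (fun i => s ^ (N ^ (i : ℕ))) w hts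
    have hprod : ∀ j, (∏ i : Fin r, (s ^ (N ^ (i : ℕ))) ^ l j i) = s ^ (e j) := by
      intro j
      have hfac : ∀ i : Fin r, (s ^ (N ^ (i : ℕ))) ^ l j i
          = s ^ (l j i * (N : ℤ) ^ (i : ℕ)) := by
        intro i
        rw [← zpow_natCast s (N ^ (i : ℕ)), ← zpow_mul]
        congr 1
        push_cast
        ring
      rw [Finset.prod_congr rfl (fun i _ => hfac i), ← zpow_sum' hs]
    have key2 : ∑ j, s ^ (e j) * g j s = 0 := by
      rw [← key]
      refine Finset.sum_congr rfl fun j _ => ?_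
      simp only [hgdef]
      rw [← hprod j]
    have hsplit : h s = (s ^ (e j₀))⁻¹ * ∑ j, s ^ (e j) * g j s := by
      simp only [hhdef]
      rw [Finset.mul_sum]
      refine Finset.sum_congr rfl fun j _ => ?_
      rw [← zpow_natCast s (n j), hncast j, zpow_sub₀ hs]
      field_simp
    rw [hsplit, key2, mul_zero]
  -- h vanishes at 0 by continuity
  have h0 : h 0 = 0 := by
    have hdense : Dense {s : ℂ | s ≠ 0} := dense_compl_singleton 0
    have := Continuous.ext_on hdense hcont continuous_const
      (fun s hs => by simpa using hzero s hs)
    exact congrFun this 0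
  -- compute h 0
  have hcomp : h 0 = σ j₀ (0, w) := by
    simp only [hhdef]
    rw [Finset.sum_eq_single j₀]
    · rw [hn0, pow_zero, one_mul]
      simp only [hgdef]
      congr 1
      have hz : (fun i : Fin r => (0 : ℂ) ^ (N ^ (i : ℕ))) = (0 : Fin r → ℂ) := by
        funext i
        exact zero_pow (by positivity)
      rw [hz]
    · intro j _ hj
      rw [zero_pow (hnpos j hj).ne', zero_mul]
    · intro hj
      exact absurd (Finset.mem_univ j₀) hj
  rw [hcomp] at h0
  exact h0
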